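/- arXiv:1708.05949 — 2 statements merged into one kernel-verified Lean document; each statement's English description precedes it below -/
import Mathlib

section
/- Let F be a linearly ordered field and let L_1, L_2, L_3, L_4 be four lines in F² in general position (no two parallel, no three concurrent). For i < j write P_{ij} = L_i ∩ L_j, so each line L_i contains exactly three of the six points P_{ij}. Then there is exactly one pair {i, j} such that P_{ij} lies strictly between the other two intersection points on L_i and also lies strictly between the other two intersection points on L_j. (Every quadrilateral structure has a unique nook point.) -/
/-- The affine functional `p ↦ a i * p.1 + b i * p.2 - c i` cutting out the `i`-th line. -/
def arrLine {F : Type*} [Field F] [LinearOrder F] [IsStrictOrderedRing F] {n : ℕ} (a b c : Fin n → F)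
    (i : Fin n) (p : F × F) : F :=
  a i * p.1 + b i * p.2 - c i

/-- `P i j` lies strictly between the other two intersection points on the line `L i`
(those are the `P i k` with `k ∉ {i, j}`). -/
def midOnLine {F : Type*} [Field F] [LinearOrder F] [IsStrictOrderedRing F]
    (P : Fin 4 → Fin 4 → F × F) (i j : Fin 4) : Prop :=
  ∀ k l : Fin 4, k ≠ l → k ≠ i → k ≠ j → l ≠ i → l ≠ j →
    ∃ t : F, 0 < t ∧ t < 1 ∧ P i j = (1 - t) • P i k + t • P i l

/-- exactly one of six propositions -/
abbrev nookEO (p1 p2 p3 p4 p5 p6 : Prop) : Prop :=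
  (p1 ∧ ¬p2 ∧ ¬p3 ∧ ¬p4 ∧ ¬p5 ∧ ¬p6) ∨ (¬p1 ∧ p2 ∧ ¬p3 ∧ ¬p4 ∧ ¬p5 ∧ ¬p6) ∨
  (¬p1 ∧ ¬p2 ∧ p3 ∧ ¬p4 ∧ ¬p5 ∧ ¬p6) ∨ (¬p1 ∧ ¬p2 ∧ ¬p3 ∧ p4 ∧ ¬p5 ∧ ¬p6) ∨
  (¬p1 ∧ ¬p2 ∧ ¬p3 ∧ ¬p4 ∧ p5 ∧ ¬p6) ∨ (¬p1 ∧ ¬p2 ∧ ¬p3 ∧ ¬p4 ∧ ¬p5 ∧ p6)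

set_option maxHeartbeats 4000000 in
set_option synthInstance.maxSize 4000 in
set_option synthInstance.maxHeartbeats 4000000 in
set_option maxRecDepth 10000 in
/-- the combinatorial core: sign analysis of a quadrilateral -/
lemma nookCore : ∀ l m n s t r e g h : Bool,
    (¬((l = t) ↔ (m = s)) → ((e = true) ↔ (l = t))) →
    (¬((n = t) ↔ (m = r)) → ((g = true) ↔ (n = t))) →
    (¬((n = s) ↔ (l = r)) → ((h = true) ↔ (n = s))) →
    (¬((l = g) ↔ (m = h)) → ((n = e) ↔ (l = g))) →
    (¬((s = g) ↔ (t = h)) → ((r = e) ↔ (s = g))) →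
    nookEO
      ((¬((n = r) ↔ (m = t))) ∧ (¬((n = r) ↔ (l = s))))
      ((¬((n = g) ↔ (t = true))) ∧ (¬((n = g) ↔ (l = e))))
      (((r = g) ↔ (m = true)) ∧ (¬((r = g) ↔ (s = e))))
      ((¬((n = h) ↔ (s = true))) ∧ (((n = h) ↔ (m = e))))
      (((r = h) ↔ (l = true)) ∧ (((r = h) ↔ (t = e))))
      ((¬((g = h) ↔ (m = l))) ∧ (¬((g = h) ↔ (t = s)))) := by decide

section SignTools

variable {F : Type*} [Field F] [LinearOrder F] [IsStrictOrderedRing F]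

lemma bmp {x y : F} (hx : x ≠ 0) (hy : y ≠ 0) :
    0 < x * y ↔ (decide (0 < x) = decide (0 < y)) := by
  rcases hx.lt_or_gt with h | h <;> rcases hy.lt_or_gt with h' | h'
  · exact iff_of_true (mul_pos_of_neg_of_neg h h')
      (by rw [decide_eq_false (asymm h), decide_eq_false (asymm h')])
  · exact iff_of_false (asymm (mul_neg_of_neg_of_pos h h'))
      (fun hq => by rw [decide_eq_false (asymm h), decide_eq_true h'] at hq; exact Bool.false_ne_true hq)
  · exact iff_of_false (asymm (mul_neg_of_pos_of_neg h h'))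
      (fun hq => by rw [decide_eq_true h, decide_eq_false (asymm h')] at hq; simp at hq)
  · exact iff_of_true (mul_pos h h') (by rw [decide_eq_true h, decide_eq_true h'])

lemma bml {x y : F} (hx : x ≠ 0) (hy : y ≠ 0) :
    x * y < 0 ↔ ¬(decide (0 < x) = decide (0 < y)) := by
  rw [← bmp hx hy]
  constructor
  · exact fun h h' => asymm h h'
  · intro h
    rcases (mul_ne_zero hx hy).lt_or_gt with h' | h'
    · exact h'
    · exact absurd h' h

lemma sign_transfer {w p z : F} (hw : w ≠ 0) (hz : z ≠ 0) (h : w * p = z) :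
    p < 0 ↔ z * w < 0 := by
  have hzw : z * w = p * w ^ 2 := by rw [← h]; ring
  have hw2 : 0 < w ^ 2 := by positivity
  rw [hzw]
  constructor
  · intro hp; exact mul_neg_of_neg_of_pos hp hw2
  · intro hpw
    by_contra hnp
    push_neg at hnp
    nlinarith

lemma csubP {x y w : F} (hsub : w = x - y) (hne : ¬(0 < x ↔ 0 < y)) : (0 < w ↔ 0 < x) := by
  by_cases hx : 0 < x
  · have hy : ¬0 < y := fun hy => hne ⟨fun _ => hy, fun _ => hx⟩
    push_neg at hy
    exact iff_of_true (by rw [hsub]; linarith) hx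
  · have hy : 0 < y := by
      by_contra hy
      exact hne ⟨fun h => absurd h hx, fun h => absurd h hy⟩
    push_neg at hx
    exact iff_of_false (by rw [hsub]; intro h; linarith) (by push_neg; linarith)

lemma sqw_neg_iff {d w : F} (hd : d ≠ 0) : d ^ 2 * w < 0 ↔ w < 0 := by
  have hd2 : 0 < d ^ 2 := by positivity
  constructor <;> intro h <;> nlinarith

lemma sqw_pos_iff {d w : F} (hd : d ≠ 0) : 0 < d ^ 2 * w ↔ 0 < w := by
  have hd2 : 0 < d ^ 2 := by positivity
  constructor <;> intro h <;> nlinarith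

lemma shNN {d z1 z2 x y : F} (hd : d ≠ 0) (h1 : z1 ≠ 0) (h2 : z2 ≠ 0) (hx : x ≠ 0) (hy : y ≠ 0) :
    (-(d * z1)) * (-(d * z2)) * (x * y) < 0 ↔
      ¬((decide (0 < z1) = decide (0 < z2)) ↔ (decide (0 < x) = decide (0 < y))) := by
  rw [show (-(d * z1)) * (-(d * z2)) * (x * y) = d ^ 2 * ((z1 * z2) * (x * y)) by ring,
    sqw_neg_iff hd, bml (mul_ne_zero h1 h2) (mul_ne_zero hx hy), decide_eq_decide,
    bmp h1 h2, bmp hx hy]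

lemma shNM {d z1 z2 x y : F} (hd : d ≠ 0) (h1 : z1 ≠ 0) (h2 : z2 ≠ 0) (hx : x ≠ 0) (hy : y ≠ 0) :
    (-(d * z1)) * (d * z2) * (x * y) < 0 ↔
      ((decide (0 < z1) = decide (0 < z2)) ↔ (decide (0 < x) = decide (0 < y))) := by
  rw [show (-(d * z1)) * (d * z2) * (x * y) = -(d ^ 2 * ((z1 * z2) * (x * y))) by ring,
    neg_lt_zero, sqw_pos_iff hd, bmp (mul_ne_zero h1 h2) (mul_ne_zero hx hy), decide_eq_decide,
    bmp h1 h2, bmp hx hy]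

lemma shPP {z1 z2 x y : F} (h1 : z1 ≠ 0) (h2 : z2 ≠ 0) (hx : x ≠ 0) (hy : y ≠ 0) :
    (z1 * z2) * (x * y) < 0 ↔
      ¬((decide (0 < z1) = decide (0 < z2)) ↔ (decide (0 < x) = decide (0 < y))) := by
  rw [bml (mul_ne_zero h1 h2) (mul_ne_zero hx hy), decide_eq_decide, bmp h1 h2, bmp hx hy]

lemma shPPn {z1 z2 x y : F} (h1 : z1 ≠ 0) (h2 : z2 ≠ 0) (hx : x ≠ 0) (hy : y ≠ 0) :
    (-z1) * (-z2) * (x * y) < 0 ↔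
      ¬((decide (0 < z1) = decide (0 < z2)) ↔ (decide (0 < x) = decide (0 < y))) := by
  rw [show (-z1) * (-z2) * (x * y) = (z1 * z2) * (x * y) by ring]
  exact shPP h1 h2 hx hy

lemma sh3 {z1 z2 x : F} (h1 : z1 ≠ 0) (h2 : z2 ≠ 0) (hx : x ≠ 0) :
    (z1 * z2) * x < 0 ↔
      ¬((decide (0 < z1) = decide (0 < z2)) ↔ (decide (0 < x) = true)) := by
  rw [bml (mul_ne_zero h1 h2) hx, decide_eq_decide, bmp h1 h2, decide_eq_true_eq]

lemma sh3n {z1 z2 x : F} (h1 : z1 ≠ 0) (h2 : z2 ≠ 0) (hx : x ≠ 0) :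
    (-(z1 * z2)) * x < 0 ↔
      ((decide (0 < z1) = decide (0 < z2)) ↔ (decide (0 < x) = true)) := by
  rw [show (-(z1 * z2)) * x = -((z1 * z2) * x) by ring, neg_lt_zero,
    bmp (mul_ne_zero h1 h2) hx, decide_eq_decide, bmp h1 h2, decide_eq_true_eq]

end SignTools

section GeomTools

variable {F : Type*} [Field F] [LinearOrder F] [IsStrictOrderedRing F]

lemma inter_unique {n : ℕ} (a b c : Fin n → F) (i j : Fin n)
    (hij : a i * b j ≠ a j * b i) {p q : F × F}
    (hpi : arrLine a b c i p = 0) (hpj : arrLine a b c j p = 0)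
    (hqi : arrLine a b c i q = 0) (hqj : arrLine a b c j q = 0) : p = q := by
  simp only [arrLine] at hpi hpj hqi hqj
  have hD : a i * b j - a j * b i ≠ 0 := sub_ne_zero.mpr hij
  have h1 : (a i * b j - a j * b i) * (p.1 - q.1) = 0 := by
    linear_combination (b j * hpi - b i * hpj - b j * hqi + b i * hqj)
  have h2 : (a i * b j - a j * b i) * (p.2 - q.2) = 0 := by
    linear_combination (a i * hpj - a j * hpi + a j * hqi - a i * hqj)
  have e1 : p.1 = q.1 := by
    have := (mul_eq_zero.mp h1).resolve_left hD; linarith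
  have e2 : p.2 = q.2 := by
    have := (mul_eq_zero.mp h2).resolve_left hD; linarith
  exact Prod.ext e1 e2

lemma arrLine_affine {n : ℕ} (a b c : Fin n → F) (i : Fin n) (t : F) (Q R : F × F) :
    arrLine a b c i ((1 - t) • Q + t • R)
      = (1 - t) * arrLine a b c i Q + t * arrLine a b c i R := by
  simp only [arrLine, Prod.fst_add, Prod.snd_add, Prod.smul_fst, Prod.smul_snd, smul_eq_mul]
  ring

lemma between_core {n : ℕ} (a b c : Fin n → F) (i j : Fin n)
    (hij : a i * b j ≠ a j * b i) {M Q R : F × F}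
    (hMi : arrLine a b c i M = 0) (hMj : arrLine a b c j M = 0)
    (hQi : arrLine a b c i Q = 0) (hRi : arrLine a b c i R = 0)
    (hlt : arrLine a b c j Q * arrLine a b c j R < 0) :
    ∃ t : F, 0 < t ∧ t < 1 ∧ M = (1 - t) • Q + t • R := by
  set u := arrLine a b c j Q with hu
  set v := arrLine a b c j R with hv
  have huv : u - v ≠ 0 := by
    rcases mul_neg_iff.mp hlt with ⟨h1, h2⟩ | ⟨h1, h2⟩ <;> intro h <;> nlinarith
  refine ⟨u / (u - v), ?_, ?_, ?_⟩
  · rcases mul_neg_iff.mp hlt with ⟨h1, h2⟩ | ⟨h1, h2⟩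
    · exact div_pos h1 (by linarith)
    · exact div_pos_of_neg_of_neg h1 (by linarith)
  · rcases mul_neg_iff.mp hlt with ⟨h1, h2⟩ | ⟨h1, h2⟩
    · rw [div_lt_one (by linarith)]; linarith
    · rw [div_lt_one_of_neg (by linarith)]; linarith
  · apply inter_unique a b c i j hij hMi hMj
    · rw [arrLine_affine, hQi, hRi]; ring
    · rw [arrLine_affine, ← hu, ← hv]; field_simp; ring

lemma between_rev {n : ℕ} (a b c : Fin n → F) (j : Fin n) {M Q R : F × F} {t : F}
    (ht0 : 0 < t) (ht1 : t < 1) (hM : M = (1 - t) • Q + t • R)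
    (hMj : arrLine a b c j M = 0)
    (hQ : arrLine a b c j Q ≠ 0) (hR : arrLine a b c j R ≠ 0) :
    arrLine a b c j Q * arrLine a b c j R < 0 := by
  have key : (1 - t) * arrLine a b c j Q + t * arrLine a b c j R = 0 := by
    rw [← arrLine_affine, ← hM, hMj]
  rcases hQ.lt_or_gt with h | h <;> rcases hR.lt_or_gt with h' | h'
  · nlinarith
  · exact mul_neg_of_neg_of_pos h h'
  · exact mul_neg_of_pos_of_neg h h'
  · nlinarith

lemma compl_pair : ∀ i j k l k' l' : Fin 4, i ≠ j → i ≠ k → i ≠ l → j ≠ k → j ≠ l → k ≠ l →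
    k' ≠ l' → k' ≠ i → k' ≠ j → l' ≠ i → l' ≠ j → ((k' = k ∧ l' = l) ∨ (k' = l ∧ l' = k)) := by
  decide

lemma mid_iff (a b c : Fin 4 → F)
    (hpar : ∀ i j : Fin 4, i ≠ j → a i * b j ≠ a j * b i)
    (hconc : ∀ i j k : Fin 4, i ≠ j → j ≠ k → i ≠ k →
      ¬ ∃ p : F × F, arrLine a b c i p = 0 ∧ arrLine a b c j p = 0 ∧ arrLine a b c k p = 0)
    (P : Fin 4 → Fin 4 → F × F)
    (hP : ∀ i j : Fin 4, i ≠ j →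
      arrLine a b c i (P i j) = 0 ∧ arrLine a b c j (P i j) = 0)
    (i j k l : Fin 4) (hij : i ≠ j) (hik : i ≠ k) (hil : i ≠ l)
    (hjk : j ≠ k) (hjl : j ≠ l) (hkl : k ≠ l) :
    midOnLine P i j ↔ arrLine a b c j (P i k) * arrLine a b c j (P i l) < 0 := by
  have hQ : arrLine a b c j (P i k) ≠ 0 := fun h =>
    hconc i k j hik (Ne.symm hjk) hij ⟨P i k, (hP i k hik).1, (hP i k hik).2, h⟩
  have hR : arrLine a b c j (P i l) ≠ 0 := fun h =>
    hconc i l j hil (Ne.symm hjl) hij ⟨P i l, (hP i l hil).1, (hP i l hil).2, h⟩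
  constructor
  · intro hm
    obtain ⟨t, ht0, ht1, hcomb⟩ := hm k l hkl (Ne.symm hik) (Ne.symm hjk) (Ne.symm hil) (Ne.symm hjl)
    exact between_rev a b c j ht0 ht1 hcomb (hP i j hij).2 hQ hR
  · intro hlt k' l' hkl' hk'i hk'j hl'i hl'j
    rcases compl_pair i j k l k' l' hij hik hil hjk hjl hkl hkl' hk'i hk'j hl'i hl'j with
      ⟨h1, h2⟩ | ⟨h1, h2⟩
    · rw [h1, h2]
      exact between_core a b c i j (hpar i j hij) (hP i j hij).1 (hP i j hij).2
        (hP i k hik).1 (hP i l hil).1 hlt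
    · rw [h1, h2]
      exact between_core a b c i j (hpar i j hij) (hP i j hij).1 (hP i j hij).2
        (hP i l hil).1 (hP i k hik).1 (by rw [mul_comm] at hlt; exact hlt)

end GeomTools
set_option maxHeartbeats 16000000 in
/-- Every quadrilateral structure (four lines in general position) has a unique nook
point: exactly one pair `{i, j}` such that `P i j = L i ∩ L j` lies strictly between the
other two intersection points on `L i` and also on `L j`. -/
theorem quadrilateral_unique_nook_point
    {F : Type*} [Field F] [LinearOrder F] [IsStrictOrderedRing F]
    (a b c : Fin 4 → F)
    (hnd : ∀ i : Fin 4, (a i, b i) ≠ (0, 0))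
    (hpar : ∀ i j : Fin 4, i ≠ j → a i * b j ≠ a j * b i)
    (hconc : ∀ i j k : Fin 4, i ≠ j → j ≠ k → i ≠ k →
      ¬ ∃ p : F × F, arrLine a b c i p = 0 ∧ arrLine a b c j p = 0 ∧ arrLine a b c k p = 0)
    (P : Fin 4 → Fin 4 → F × F)
    (hP : ∀ i j : Fin 4, i ≠ j →
      arrLine a b c i (P i j) = 0 ∧ arrLine a b c j (P i j) = 0) :
    ∃ i j : Fin 4, i ≠ j ∧ midOnLine P i j ∧ midOnLine P j i ∧
      ∀ i' j' : Fin 4, i' ≠ j' → midOnLine P i' j' → midOnLine P j' i' →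
        (i' = i ∧ j' = j) ∨ (i' = j ∧ j' = i) := by
  have Psym : ∀ i j : Fin 4, i ≠ j → P j i = P i j := fun i j hij =>
    inter_unique a b c i j (hpar i j hij) (hP j i hij.symm).2 (hP j i hij.symm).1
      (hP i j hij).1 (hP i j hij).2
  have hnzv : ∀ i j k : Fin 4, i ≠ j → i ≠ k → j ≠ k → arrLine a b c k (P i j) ≠ 0 :=
    fun i j k hij hik hjk h =>
      hconc i j k hij hjk hik ⟨P i j, (hP i j hij).1, (hP i j hij).2, h⟩
  obtain ⟨d, hd_def⟩ : ∃ d : F, d = a 0 * b 1 - a 1 * b 0 := ⟨_, rfl⟩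
  obtain ⟨L, hL_def⟩ : ∃ L : F, L = a 2 * b 1 - a 1 * b 2 := ⟨_, rfl⟩
  obtain ⟨Mv, hM_def⟩ : ∃ Mv : F, Mv = a 0 * b 2 - a 2 * b 0 := ⟨_, rfl⟩
  obtain ⟨S, hS_def⟩ : ∃ S : F, S = a 3 * b 1 - a 1 * b 3 := ⟨_, rfl⟩
  obtain ⟨T, hT_def⟩ : ∃ T : F, T = a 0 * b 3 - a 3 * b 0 := ⟨_, rfl⟩
  obtain ⟨nu, hnu_def⟩ : ∃ nu : F, nu = arrLine a b c 2 (P 0 1) := ⟨_, rfl⟩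
  obtain ⟨rho, hrho_def⟩ : ∃ rho : F, rho = arrLine a b c 3 (P 0 1) := ⟨_, rfl⟩
  obtain ⟨E, hE_def⟩ : ∃ E : F, E = L * T - Mv * S := ⟨_, rfl⟩
  obtain ⟨G, hG_def⟩ : ∃ G : F, G = nu * T - Mv * rho := ⟨_, rfl⟩
  obtain ⟨H, hH_def⟩ : ∃ H : F, H = nu * S - L * rho := ⟨_, rfl⟩
  have hd : d ≠ 0 := by rw [hd_def]; exact sub_ne_zero.mpr (hpar 0 1 (by decide))
  have hL : L ≠ 0 := by rw [hL_def]; exact sub_ne_zero.mpr (hpar 2 1 (by decide))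
  have hM : Mv ≠ 0 := by rw [hM_def]; exact sub_ne_zero.mpr (hpar 0 2 (by decide))
  have hS : S ≠ 0 := by rw [hS_def]; exact sub_ne_zero.mpr (hpar 3 1 (by decide))
  have hT : T ≠ 0 := by rw [hT_def]; exact sub_ne_zero.mpr (hpar 0 3 (by decide))
  have hnu : nu ≠ 0 := by
    rw [hnu_def]; exact hnzv 0 1 2 (by decide) (by decide) (by decide)
  have hrho : rho ≠ 0 := by
    rw [hrho_def]; exact hnzv 0 1 3 (by decide) (by decide) (by decide)
  -- the two linear identities
  have I2 : ∀ p : F × F, d * arrLine a b c 2 p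
      = L * arrLine a b c 0 p + Mv * arrLine a b c 1 p + d * nu := by
    intro p
    have h0 := (hP 0 1 (by decide)).1
    have h1 := (hP 0 1 (by decide)).2
    simp only [arrLine] at h0 h1
    rw [hd_def, hL_def, hM_def, hnu_def]
    simp only [arrLine]
    linear_combination (-(a 2 * b 1 - a 1 * b 2)) * h0 + (-(a 0 * b 2 - a 2 * b 0)) * h1
  have I3 : ∀ p : F × F, d * arrLine a b c 3 p
      = S * arrLine a b c 0 p + T * arrLine a b c 1 p + d * rho := by
    intro p
    have h0 := (hP 0 1 (by decide)).1
    have h1 := (hP 0 1 (by decide)).2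
    simp only [arrLine] at h0 h1
    rw [hd_def, hS_def, hT_def, hrho_def]
    simp only [arrLine]
    linear_combination (-(a 3 * b 1 - a 1 * b 3)) * h0 + (-(a 0 * b 3 - a 3 * b 0)) * h1
  -- value relations
  have RA : Mv * arrLine a b c 1 (P 0 2) = -(d * nu) := by
    have h := I2 (P 0 2)
    rw [(hP 0 2 (by decide)).1, (hP 0 2 (by decide)).2] at h
    linear_combination (-1 : F) * h
  have RB : T * arrLine a b c 1 (P 0 3) = -(d * rho) := by
    have h := I3 (P 0 3)
    rw [(hP 0 3 (by decide)).1, (hP 0 3 (by decide)).2] at h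
    linear_combination (-1 : F) * h
  have RC : L * arrLine a b c 0 (P 1 2) = -(d * nu) := by
    have h := I2 (P 1 2)
    rw [(hP 1 2 (by decide)).1, (hP 1 2 (by decide)).2] at h
    linear_combination (-1 : F) * h
  have RD : S * arrLine a b c 0 (P 1 3) = -(d * rho) := by
    have h := I3 (P 1 3)
    rw [(hP 1 3 (by decide)).1, (hP 1 3 (by decide)).2] at h
    linear_combination (-1 : F) * h
  have RE : E * arrLine a b c 0 (P 2 3) = -(d * G) := by
    have i2 := I2 (P 2 3)
    have i3 := I3 (P 2 3)
    rw [(hP 2 3 (by decide)).1] at i2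
    rw [(hP 2 3 (by decide)).2] at i3
    linear_combination (arrLine a b c 0 (P 2 3)) * hE_def + d * hG_def - T * i2 + Mv * i3
  have RF : E * arrLine a b c 1 (P 2 3) = d * H := by
    have i2 := I2 (P 2 3)
    have i3 := I3 (P 2 3)
    rw [(hP 2 3 (by decide)).1] at i2
    rw [(hP 2 3 (by decide)).2] at i3
    linear_combination (arrLine a b c 1 (P 2 3)) * hE_def - d * hH_def + S * i2 - L * i3
  have RG : T * arrLine a b c 2 (P 0 3) = G := by
    apply mul_left_cancel₀ hd
    have i2 := I2 (P 0 3)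
    rw [(hP 0 3 (by decide)).1] at i2
    linear_combination T * i2 + Mv * RB - d * hG_def
  have RH : S * arrLine a b c 2 (P 1 3) = H := by
    apply mul_left_cancel₀ hd
    have i2 := I2 (P 1 3)
    rw [(hP 1 3 (by decide)).1] at i2
    linear_combination S * i2 + L * RD - d * hH_def
  have RI : Mv * arrLine a b c 3 (P 0 2) = -G := by
    apply mul_left_cancel₀ hd
    have i3 := I3 (P 0 2)
    rw [(hP 0 2 (by decide)).1] at i3
    linear_combination Mv * i3 + T * RA + d * hG_def
  have RJ : L * arrLine a b c 3 (P 1 2) = -H := by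
    apply mul_left_cancel₀ hd
    have i3 := I3 (P 1 2)
    rw [(hP 1 2 (by decide)).1] at i3
    linear_combination L * i3 + S * RC + d * hH_def
  have hG : G ≠ 0 := by
    rw [← RG]; exact mul_ne_zero hT (hnzv 0 3 2 (by decide) (by decide) (by decide))
  have hH : H ≠ 0 := by
    rw [← RH]; exact mul_ne_zero hS (hnzv 1 3 2 (by decide) (by decide) (by decide))
  have hE : E ≠ 0 := by
    intro h
    rw [h, zero_mul] at RE
    have : d * G = 0 := by linarith
    exact mul_ne_zero hd hG this
  -- auxiliary nonzero facts
  have hdnu : -(d * nu) ≠ 0 := neg_ne_zero.mpr (mul_ne_zero hd hnu)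
  have hdrho : -(d * rho) ≠ 0 := neg_ne_zero.mpr (mul_ne_zero hd hrho)
  have hdG : -(d * G) ≠ 0 := neg_ne_zero.mpr (mul_ne_zero hd hG)
  have hdH : d * H ≠ 0 := mul_ne_zero hd hH
  -- the twelve characterizations
  have hm01 : midOnLine P 0 1 ↔
      ¬((decide (0 < nu) = decide (0 < rho)) ↔ (decide (0 < Mv) = decide (0 < T))) := by
    rw [mid_iff a b c hpar hconc P hP 0 1 2 3 (by decide) (by decide) (by decide)
      (by decide) (by decide) (by decide)]
    have hprod : (Mv * T) * (arrLine a b c 1 (P 0 2) * arrLine a b c 1 (P 0 3))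
        = (-(d * nu)) * (-(d * rho)) := by
      rw [show (Mv * T) * (arrLine a b c 1 (P 0 2) * arrLine a b c 1 (P 0 3))
        = (Mv * arrLine a b c 1 (P 0 2)) * (T * arrLine a b c 1 (P 0 3)) by ring, RA, RB]
    rw [sign_transfer (mul_ne_zero hM hT) (mul_ne_zero hdnu hdrho) hprod]
    exact shNN hd hnu hrho hM hT
  have hm10 : midOnLine P 1 0 ↔
      ¬((decide (0 < nu) = decide (0 < rho)) ↔ (decide (0 < L) = decide (0 < S))) := by
    rw [mid_iff a b c hpar hconc P hP 1 0 2 3 (by decide) (by decide) (by decide)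
      (by decide) (by decide) (by decide)]
    have hprod : (L * S) * (arrLine a b c 0 (P 1 2) * arrLine a b c 0 (P 1 3))
        = (-(d * nu)) * (-(d * rho)) := by
      rw [show (L * S) * (arrLine a b c 0 (P 1 2) * arrLine a b c 0 (P 1 3))
        = (L * arrLine a b c 0 (P 1 2)) * (S * arrLine a b c 0 (P 1 3)) by ring, RC, RD]
    rw [sign_transfer (mul_ne_zero hL hS) (mul_ne_zero hdnu hdrho) hprod]
    exact shNN hd hnu hrho hL hS
  have hm02 : midOnLine P 0 2 ↔
      ¬((decide (0 < nu) = decide (0 < G)) ↔ (decide (0 < T) = true)) := by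
    rw [mid_iff a b c hpar hconc P hP 0 2 1 3 (by decide) (by decide) (by decide)
      (by decide) (by decide) (by decide), ← hnu_def]
    have hprod : T * (nu * arrLine a b c 2 (P 0 3)) = nu * G := by
      rw [show T * (nu * arrLine a b c 2 (P 0 3))
        = nu * (T * arrLine a b c 2 (P 0 3)) by ring, RG]
    rw [sign_transfer hT (mul_ne_zero hnu hG) hprod]
    exact sh3 hnu hG hT
  have hm20 : midOnLine P 2 0 ↔
      ¬((decide (0 < nu) = decide (0 < G)) ↔ (decide (0 < L) = decide (0 < E))) := by
    rw [mid_iff a b c hpar hconc P hP 2 0 1 3 (by decide) (by decide) (by decide)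
      (by decide) (by decide) (by decide), Psym 1 2 (by decide)]
    have hprod : (L * E) * (arrLine a b c 0 (P 1 2) * arrLine a b c 0 (P 2 3))
        = (-(d * nu)) * (-(d * G)) := by
      rw [show (L * E) * (arrLine a b c 0 (P 1 2) * arrLine a b c 0 (P 2 3))
        = (L * arrLine a b c 0 (P 1 2)) * (E * arrLine a b c 0 (P 2 3)) by ring, RC, RE]
    rw [sign_transfer (mul_ne_zero hL hE) (mul_ne_zero hdnu hdG) hprod]
    exact shNN hd hnu hG hL hE
  have hm03 : midOnLine P 0 3 ↔
      ((decide (0 < rho) = decide (0 < G)) ↔ (decide (0 < Mv) = true)) := by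
    rw [mid_iff a b c hpar hconc P hP 0 3 1 2 (by decide) (by decide) (by decide)
      (by decide) (by decide) (by decide), ← hrho_def]
    have hprod : Mv * (rho * arrLine a b c 3 (P 0 2)) = -(rho * G) := by
      rw [show Mv * (rho * arrLine a b c 3 (P 0 2))
        = rho * (Mv * arrLine a b c 3 (P 0 2)) by ring, RI]
      ring
    rw [sign_transfer hM (neg_ne_zero.mpr (mul_ne_zero hrho hG)) hprod]
    exact sh3n hrho hG hM
  have hm30 : midOnLine P 3 0 ↔
      ¬((decide (0 < rho) = decide (0 < G)) ↔ (decide (0 < S) = decide (0 < E))) := by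
    rw [mid_iff a b c hpar hconc P hP 3 0 1 2 (by decide) (by decide) (by decide)
      (by decide) (by decide) (by decide), Psym 1 3 (by decide), Psym 2 3 (by decide)]
    have hprod : (S * E) * (arrLine a b c 0 (P 1 3) * arrLine a b c 0 (P 2 3))
        = (-(d * rho)) * (-(d * G)) := by
      rw [show (S * E) * (arrLine a b c 0 (P 1 3) * arrLine a b c 0 (P 2 3))
        = (S * arrLine a b c 0 (P 1 3)) * (E * arrLine a b c 0 (P 2 3)) by ring, RD, RE]
    rw [sign_transfer (mul_ne_zero hS hE) (mul_ne_zero hdrho hdG) hprod]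
    exact shNN hd hrho hG hS hE
  have hm12 : midOnLine P 1 2 ↔
      ¬((decide (0 < nu) = decide (0 < H)) ↔ (decide (0 < S) = true)) := by
    rw [mid_iff a b c hpar hconc P hP 1 2 0 3 (by decide) (by decide) (by decide)
      (by decide) (by decide) (by decide), Psym 0 1 (by decide), ← hnu_def]
    have hprod : S * (nu * arrLine a b c 2 (P 1 3)) = nu * H := by
      rw [show S * (nu * arrLine a b c 2 (P 1 3))
        = nu * (S * arrLine a b c 2 (P 1 3)) by ring, RH]
    rw [sign_transfer hS (mul_ne_zero hnu hH) hprod]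
    exact sh3 hnu hH hS
  have hm21 : midOnLine P 2 1 ↔
      ((decide (0 < nu) = decide (0 < H)) ↔ (decide (0 < Mv) = decide (0 < E))) := by
    rw [mid_iff a b c hpar hconc P hP 2 1 0 3 (by decide) (by decide) (by decide)
      (by decide) (by decide) (by decide), Psym 0 2 (by decide)]
    have hprod : (Mv * E) * (arrLine a b c 1 (P 0 2) * arrLine a b c 1 (P 2 3))
        = (-(d * nu)) * (d * H) := by
      rw [show (Mv * E) * (arrLine a b c 1 (P 0 2) * arrLine a b c 1 (P 2 3))
        = (Mv * arrLine a b c 1 (P 0 2)) * (E * arrLine a b c 1 (P 2 3)) by ring, RA, RF]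
    rw [sign_transfer (mul_ne_zero hM hE) (mul_ne_zero hdnu hdH) hprod]
    exact shNM hd hnu hH hM hE
  have hm13 : midOnLine P 1 3 ↔
      ((decide (0 < rho) = decide (0 < H)) ↔ (decide (0 < L) = true)) := by
    rw [mid_iff a b c hpar hconc P hP 1 3 0 2 (by decide) (by decide) (by decide)
      (by decide) (by decide) (by decide), Psym 0 1 (by decide), ← hrho_def]
    have hprod : L * (rho * arrLine a b c 3 (P 1 2)) = -(rho * H) := by
      rw [show L * (rho * arrLine a b c 3 (P 1 2))
        = rho * (L * arrLine a b c 3 (P 1 2)) by ring, RJ]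
      ring
    rw [sign_transfer hL (neg_ne_zero.mpr (mul_ne_zero hrho hH)) hprod]
    exact sh3n hrho hH hL
  have hm31 : midOnLine P 3 1 ↔
      ((decide (0 < rho) = decide (0 < H)) ↔ (decide (0 < T) = decide (0 < E))) := by
    rw [mid_iff a b c hpar hconc P hP 3 1 0 2 (by decide) (by decide) (by decide)
      (by decide) (by decide) (by decide), Psym 0 3 (by decide), Psym 2 3 (by decide)]
    have hprod : (T * E) * (arrLine a b c 1 (P 0 3) * arrLine a b c 1 (P 2 3))
        = (-(d * rho)) * (d * H) := by
      rw [show (T * E) * (arrLine a b c 1 (P 0 3) * arrLine a b c 1 (P 2 3))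
        = (T * arrLine a b c 1 (P 0 3)) * (E * arrLine a b c 1 (P 2 3)) by ring, RB, RF]
    rw [sign_transfer (mul_ne_zero hT hE) (mul_ne_zero hdrho hdH) hprod]
    exact shNM hd hrho hH hT hE
  have hm23 : midOnLine P 2 3 ↔
      ¬((decide (0 < G) = decide (0 < H)) ↔ (decide (0 < Mv) = decide (0 < L))) := by
    rw [mid_iff a b c hpar hconc P hP 2 3 0 1 (by decide) (by decide) (by decide)
      (by decide) (by decide) (by decide), Psym 0 2 (by decide), Psym 1 2 (by decide)]
    have hprod : (Mv * L) * (arrLine a b c 3 (P 0 2) * arrLine a b c 3 (P 1 2))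
        = (-G) * (-H) := by
      rw [show (Mv * L) * (arrLine a b c 3 (P 0 2) * arrLine a b c 3 (P 1 2))
        = (Mv * arrLine a b c 3 (P 0 2)) * (L * arrLine a b c 3 (P 1 2)) by ring, RI, RJ]
    rw [sign_transfer (mul_ne_zero hM hL)
      (mul_ne_zero (neg_ne_zero.mpr hG) (neg_ne_zero.mpr hH)) hprod]
    exact shPPn hG hH hM hL
  have hm32 : midOnLine P 3 2 ↔
      ¬((decide (0 < G) = decide (0 < H)) ↔ (decide (0 < T) = decide (0 < S))) := by
    rw [mid_iff a b c hpar hconc P hP 3 2 0 1 (by decide) (by decide) (by decide)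
      (by decide) (by decide) (by decide), Psym 0 3 (by decide), Psym 1 3 (by decide)]
    have hprod : (T * S) * (arrLine a b c 2 (P 0 3) * arrLine a b c 2 (P 1 3))
        = G * H := by
      rw [show (T * S) * (arrLine a b c 2 (P 0 3) * arrLine a b c 2 (P 1 3))
        = (T * arrLine a b c 2 (P 0 3)) * (S * arrLine a b c 2 (P 1 3)) by ring, RG, RH]
    rw [sign_transfer (mul_ne_zero hT hS) (mul_ne_zero hG hH) hprod]
    exact shPP hG hH hT hS
  -- the five sign constraints
  have c1 : ¬((decide (0 < L) = decide (0 < T)) ↔ (decide (0 < Mv) = decide (0 < S))) →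
      ((decide (0 < E) = true) ↔ (decide (0 < L) = decide (0 < T))) := by
    intro hne
    rw [← bmp hL hT, ← bmp hM hS] at hne
    rw [decide_eq_true_eq, ← bmp hL hT]
    exact csubP hE_def hne
  have c2 : ¬((decide (0 < nu) = decide (0 < T)) ↔ (decide (0 < Mv) = decide (0 < rho))) →
      ((decide (0 < G) = true) ↔ (decide (0 < nu) = decide (0 < T))) := by
    intro hne
    rw [← bmp hnu hT, ← bmp hM hrho] at hne
    rw [decide_eq_true_eq, ← bmp hnu hT]
    exact csubP hG_def hne
  have c3 : ¬((decide (0 < nu) = decide (0 < S)) ↔ (decide (0 < L) = decide (0 < rho))) →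
      ((decide (0 < H) = true) ↔ (decide (0 < nu) = decide (0 < S))) := by
    intro hne
    rw [← bmp hnu hS, ← bmp hL hrho] at hne
    rw [decide_eq_true_eq, ← bmp hnu hS]
    exact csubP hH_def hne
  have c4 : ¬((decide (0 < L) = decide (0 < G)) ↔ (decide (0 < Mv) = decide (0 < H))) →
      ((decide (0 < nu) = decide (0 < E)) ↔ (decide (0 < L) = decide (0 < G))) := by
    intro hne
    have key : nu * E = L * G - Mv * H := by rw [hE_def, hG_def, hH_def]; ring
    rw [← bmp hL hG, ← bmp hM hH] at hne
    rw [← bmp hnu hE, ← bmp hL hG]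
    exact csubP key hne
  have c5 : ¬((decide (0 < S) = decide (0 < G)) ↔ (decide (0 < T) = decide (0 < H))) →
      ((decide (0 < rho) = decide (0 < E)) ↔ (decide (0 < S) = decide (0 < G))) := by
    intro hne
    have key : rho * E = S * G - T * H := by rw [hE_def, hG_def, hH_def]; ring
    rw [← bmp hS hG, ← bmp hT hH] at hne
    rw [← bmp hrho hE, ← bmp hS hG]
    exact csubP key hne
  have core := nookCore (decide (0 < L)) (decide (0 < Mv)) (decide (0 < nu)) (decide (0 < S))
    (decide (0 < T)) (decide (0 < rho)) (decide (0 < E)) (decide (0 < G)) (decide (0 < H))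
    c1 c2 c3 c4 c5
  have coreM : nookEO
      (midOnLine P 0 1 ∧ midOnLine P 1 0) (midOnLine P 0 2 ∧ midOnLine P 2 0)
      (midOnLine P 0 3 ∧ midOnLine P 3 0) (midOnLine P 1 2 ∧ midOnLine P 2 1)
      (midOnLine P 1 3 ∧ midOnLine P 3 1) (midOnLine P 2 3 ∧ midOnLine P 3 2) := by
    rw [and_congr hm01 hm10, and_congr hm02 hm20, and_congr hm03 hm30,
      and_congr hm12 hm21, and_congr hm13 hm31, and_congr hm23 hm32]
    exact core
  clear core hm01 hm10 hm02 hm20 hm03 hm30 hm12 hm21 hm13 hm31 hm23 hm32 c1 c2 c3 c4 c5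
  clear RA RB RC RD RE RF RG RH RI RJ I2 I3 hdnu hdrho hdG hdH
  clear hG hH hE hd hL hM hS hT hnu hrho
  clear hd_def hL_def hM_def hS_def hT_def hnu_def hrho_def hE_def hG_def hH_def
  clear Psym hnzv hnd hpar hconc hP
  have pcases : ∀ x y : Fin 4, x ≠ y →
      ((x=0∧y=1)∨(x=1∧y=0)∨(x=0∧y=2)∨(x=2∧y=0)∨(x=0∧y=3)∨(x=3∧y=0)∨
       (x=1∧y=2)∨(x=2∧y=1)∨(x=1∧y=3)∨(x=3∧y=1)∨(x=2∧y=3)∨(x=3∧y=2)) := by decide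
  rcases coreM with ⟨⟨hA, hB⟩, hN2, hN3, hN4, hN5, hN6⟩ | ⟨hN1, ⟨hA, hB⟩, hN3, hN4, hN5, hN6⟩ |
    ⟨hN1, hN2, ⟨hA, hB⟩, hN4, hN5, hN6⟩ | ⟨hN1, hN2, hN3, ⟨hA, hB⟩, hN5, hN6⟩ |
    ⟨hN1, hN2, hN3, hN4, ⟨hA, hB⟩, hN6⟩ | ⟨hN1, hN2, hN3, hN4, hN5, ⟨hA, hB⟩⟩
  · refine ⟨0, 1, by decide, hA, hB, ?_⟩
    intro i' j' hne hx hy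
    rcases pcases i' j' hne with ⟨rfl,rfl⟩|⟨rfl,rfl⟩|⟨rfl,rfl⟩|⟨rfl,rfl⟩|⟨rfl,rfl⟩|⟨rfl,rfl⟩|⟨rfl,rfl⟩|⟨rfl,rfl⟩|⟨rfl,rfl⟩|⟨rfl,rfl⟩|⟨rfl,rfl⟩|⟨rfl,rfl⟩ <;>
      first
        | exact Or.inl ⟨rfl, rfl⟩
        | exact Or.inr ⟨rfl, rfl⟩
        | exact absurd (And.intro hx hy) hN2
        | exact absurd (And.intro hy hx) hN2
        | exact absurd (And.intro hx hy) hN3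
        | exact absurd (And.intro hy hx) hN3
        | exact absurd (And.intro hx hy) hN4
        | exact absurd (And.intro hy hx) hN4
        | exact absurd (And.intro hx hy) hN5
        | exact absurd (And.intro hy hx) hN5
        | exact absurd (And.intro hx hy) hN6
        | exact absurd (And.intro hy hx) hN6
  · refine ⟨0, 2, by decide, hA, hB, ?_⟩
    intro i' j' hne hx hy
    rcases pcases i' j' hne with ⟨rfl,rfl⟩|⟨rfl,rfl⟩|⟨rfl,rfl⟩|⟨rfl,rfl⟩|⟨rfl,rfl⟩|⟨rfl,rfl⟩|⟨rfl,rfl⟩|⟨rfl,rfl⟩|⟨rfl,rfl⟩|⟨rfl,rfl⟩|⟨rfl,rfl⟩|⟨rfl,rfl⟩ <;>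
      first
        | exact Or.inl ⟨rfl, rfl⟩
        | exact Or.inr ⟨rfl, rfl⟩
        | exact absurd (And.intro hx hy) hN1
        | exact absurd (And.intro hy hx) hN1
        | exact absurd (And.intro hx hy) hN3
        | exact absurd (And.intro hy hx) hN3
        | exact absurd (And.intro hx hy) hN4
        | exact absurd (And.intro hy hx) hN4
        | exact absurd (And.intro hx hy) hN5
        | exact absurd (And.intro hy hx) hN5
        | exact absurd (And.intro hx hy) hN6
        | exact absurd (And.intro hy hx) hN6
  · refine ⟨0, 3, by decide, hA, hB, ?_⟩
    intro i' j' hne hx hy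
    rcases pcases i' j' hne with ⟨rfl,rfl⟩|⟨rfl,rfl⟩|⟨rfl,rfl⟩|⟨rfl,rfl⟩|⟨rfl,rfl⟩|⟨rfl,rfl⟩|⟨rfl,rfl⟩|⟨rfl,rfl⟩|⟨rfl,rfl⟩|⟨rfl,rfl⟩|⟨rfl,rfl⟩|⟨rfl,rfl⟩ <;>
      first
        | exact Or.inl ⟨rfl, rfl⟩
        | exact Or.inr ⟨rfl, rfl⟩
        | exact absurd (And.intro hx hy) hN1
        | exact absurd (And.intro hy hx) hN1
        | exact absurd (And.intro hx hy) hN2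
        | exact absurd (And.intro hy hx) hN2
        | exact absurd (And.intro hx hy) hN4
        | exact absurd (And.intro hy hx) hN4
        | exact absurd (And.intro hx hy) hN5
        | exact absurd (And.intro hy hx) hN5
        | exact absurd (And.intro hx hy) hN6
        | exact absurd (And.intro hy hx) hN6
  · refine ⟨1, 2, by decide, hA, hB, ?_⟩
    intro i' j' hne hx hy
    rcases pcases i' j' hne with ⟨rfl,rfl⟩|⟨rfl,rfl⟩|⟨rfl,rfl⟩|⟨rfl,rfl⟩|⟨rfl,rfl⟩|⟨rfl,rfl⟩|⟨rfl,rfl⟩|⟨rfl,rfl⟩|⟨rfl,rfl⟩|⟨rfl,rfl⟩|⟨rfl,rfl⟩|⟨rfl,rfl⟩ <;>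
      first
        | exact Or.inl ⟨rfl, rfl⟩
        | exact Or.inr ⟨rfl, rfl⟩
        | exact absurd (And.intro hx hy) hN1
        | exact absurd (And.intro hy hx) hN1
        | exact absurd (And.intro hx hy) hN2
        | exact absurd (And.intro hy hx) hN2
        | exact absurd (And.intro hx hy) hN3
        | exact absurd (And.intro hy hx) hN3
        | exact absurd (And.intro hx hy) hN5
        | exact absurd (And.intro hy hx) hN5
        | exact absurd (And.intro hx hy) hN6
        | exact absurd (And.intro hy hx) hN6
  · refine ⟨1, 3, by decide, hA, hB, ?_⟩
    intro i' j' hne hx hy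
    rcases pcases i' j' hne with ⟨rfl,rfl⟩|⟨rfl,rfl⟩|⟨rfl,rfl⟩|⟨rfl,rfl⟩|⟨rfl,rfl⟩|⟨rfl,rfl⟩|⟨rfl,rfl⟩|⟨rfl,rfl⟩|⟨rfl,rfl⟩|⟨rfl,rfl⟩|⟨rfl,rfl⟩|⟨rfl,rfl⟩ <;>
      first
        | exact Or.inl ⟨rfl, rfl⟩
        | exact Or.inr ⟨rfl, rfl⟩
        | exact absurd (And.intro hx hy) hN1
        | exact absurd (And.intro hy hx) hN1
        | exact absurd (And.intro hx hy) hN2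
        | exact absurd (And.intro hy hx) hN2
        | exact absurd (And.intro hx hy) hN3
        | exact absurd (And.intro hy hx) hN3
        | exact absurd (And.intro hx hy) hN4
        | exact absurd (And.intro hy hx) hN4
        | exact absurd (And.intro hx hy) hN6
        | exact absurd (And.intro hy hx) hN6
  · refine ⟨2, 3, by decide, hA, hB, ?_⟩
    intro i' j' hne hx hy
    rcases pcases i' j' hne with ⟨rfl,rfl⟩|⟨rfl,rfl⟩|⟨rfl,rfl⟩|⟨rfl,rfl⟩|⟨rfl,rfl⟩|⟨rfl,rfl⟩|⟨rfl,rfl⟩|⟨rfl,rfl⟩|⟨rfl,rfl⟩|⟨rfl,rfl⟩|⟨rfl,rfl⟩|⟨rfl,rfl⟩ <;>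
      first
        | exact Or.inl ⟨rfl, rfl⟩
        | exact Or.inr ⟨rfl, rfl⟩
        | exact absurd (And.intro hx hy) hN1
        | exact absurd (And.intro hy hx) hN1
        | exact absurd (And.intro hx hy) hN2
        | exact absurd (And.intro hy hx) hN2
        | exact absurd (And.intro hx hy) hN3
        | exact absurd (And.intro hy hx) hN3
        | exact absurd (And.intro hx hy) hN4
        | exact absurd (And.intro hy hx) hN4
        | exact absurd (And.intro hx hy) hN5
        | exact absurd (And.intro hy hx) hN5
end

section
/- Let n ≥ 1. For an enumeration a_1, …, a_n of {1, …, n} with a_1 = 1, call a partition of {1, …, n} into nonempty blocks admissible if every block is a set of consecutive integers and, for each block, its elements occur along the sequence a_1, …, a_n in increasing order; say the enumeration is 2-standard consecutive if the minimum number of blocks of an admissible partition equals 2. Then the number of 2-standard consecutive enumerations of {1, …, n} starting with 1 is exactly 2^{n−1} − n. (The set T_n of 2-standard consecutive n-cycles in S_n satisfies #(T_n) = 2^{n−1} − n.) -/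
/-- `P` is an admissible partition for the enumeration `a` of `Fin n`: its blocks are
nonempty, every element lies in exactly one block, every block is a set of consecutive
integers (an order interval), and the elements of each block occur along the sequence
`a 0, a 1, …, a (n-1)` in increasing order. -/
def AdmissiblePartition (n : ℕ) (a : Fin n → Fin n) (P : Finset (Finset (Fin n))) : Prop :=
  (∀ B ∈ P, B.Nonempty) ∧
  (∀ x : Fin n, ∃! B : Finset (Fin n), B ∈ P ∧ x ∈ B) ∧
  (∀ B ∈ P, ∀ u v w : Fin n, u ∈ B → w ∈ B → u ≤ v → v ≤ w → v ∈ B) ∧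
  (∀ B ∈ P, ∀ s t : Fin n, a s ∈ B → a t ∈ B → a s < a t → s < t)


open Finset

open Classical in
noncomputable def cutset (n : ℕ) (p : Fin n → Fin n) : Finset (Fin n) :=
  Finset.univ.filter (fun i => ∃ h : (i : ℕ) + 1 < n, p ⟨(i:ℕ)+1, h⟩ < p i)

lemma mem_cutset {n : ℕ} {p : Fin n → Fin n} {i : Fin n} :
    i ∈ cutset n p ↔ ∃ h : (i : ℕ) + 1 < n, p ⟨(i:ℕ)+1, h⟩ < p i := by
  simp [cutset]

/-- if there is no cut in `[u, v)` then `p u < p v`. -/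
lemma lt_of_no_cut {n : ℕ} {p : Fin n → Fin n} (hp : Function.Injective p) :
    ∀ (k : ℕ) (u v : Fin n), (v : ℕ) = (u : ℕ) + k + 1 →
      (∀ z : Fin n, u ≤ z → z < v → z ∉ cutset n p) → p u < p v := by
  intro k
  induction k with
  | zero =>
    intro u v hv h
    have huv : u < v := by rw [Fin.lt_def]; omega
    have h1 : (u : ℕ) + 1 < n := by have := v.isLt; omega
    have hvu : v = ⟨(u:ℕ)+1, h1⟩ := by apply Fin.ext; simp; omega
    have := h u le_rfl huv
    rw [mem_cutset] at this
    push_neg at this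
    have h2 := this h1
    rcases lt_or_eq_of_le h2 with h3 | h3
    · rwa [hvu]
    · exact absurd (hp h3) (by intro he; have := congrArg Fin.val he; simp at this)
  | succ k ih =>
    intro u v hv h
    have h1 : (u : ℕ) + 1 < n := by have := v.isLt; omega
    set u' : Fin n := ⟨(u:ℕ)+1, h1⟩ with hu'
    have huv : u < v := by rw [Fin.lt_def]; omega
    have hstep : p u < p u' := by
      have := h u le_rfl huv
      rw [mem_cutset] at this
      push_neg at this
      have h2 := this h1
      rcases lt_or_eq_of_le h2 with h3 | h3
      · exact h3
      · exact absurd (hp h3) (by intro he; have := congrArg Fin.val he; simp at this)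
    refine hstep.trans (ih u' v (show (v:ℕ) = ((u:ℕ)+1) + k + 1 by omega) ?_)
    intro z hz1 hz2
    exact h z (le_trans (Fin.le_def.mpr (Nat.le_succ _)) hz1) hz2

lemma lt_of_no_cut' {n : ℕ} {p : Fin n → Fin n} (hp : Function.Injective p)
    {u v : Fin n} (huv : u < v)
    (h : ∀ z : Fin n, u ≤ z → z < v → z ∉ cutset n p) : p u < p v := by
  have : (v : ℕ) = (u : ℕ) + ((v:ℕ) - (u:ℕ) - 1) + 1 := by
    rw [Fin.lt_def] at huv; omega
  exact lt_of_no_cut hp _ u v this h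

lemma card_lower {n : ℕ} (hn : 1 ≤ n) {a p : Fin n → Fin n}
    {P : Finset (Finset (Fin n))} (hP : AdmissiblePartition n a P)
    (hap : ∀ x, a (p x) = x) :
    (cutset n p).card + 1 ≤ P.card := by
  classical
  obtain ⟨hne, huniq, hint, hinc⟩ := hP
  choose blk hblkP hblkmem using fun x => (huniq x).exists
  have hlast : n - 1 < n := by omega
  set last : Fin n := ⟨n - 1, hlast⟩ with hlastdef
  have hkey : ∀ x y : Fin n, x ∈ cutset n p → x < y → blk x ≠ blk y := by
    intro x y hx hxy heq
    obtain ⟨hx1, hx2⟩ := mem_cutset.1 hx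
    set x1 : Fin n := ⟨(x:ℕ)+1, hx1⟩ with hx1def
    have hxx1 : x ≤ x1 := Fin.le_def.mpr (Nat.le_succ _)
    have hx1y : x1 ≤ y := Fin.le_def.mpr (by have := Fin.lt_def.mp hxy; simp [hx1def]; omega)
    have hx1mem : x1 ∈ blk x :=
      hint (blk x) (hblkP x) x x1 y (hblkmem x) (heq ▸ hblkmem y) hxx1 hx1y
    have h5 := hinc (blk x) (hblkP x) (p x) (p x1) (by rw [hap]; exact hblkmem x)
      (by rw [hap]; exact hx1mem)
      (by rw [hap, hap]; exact Fin.lt_def.mpr (by simp [hx1def]))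
    exact absurd h5 (not_lt.2 (le_of_lt hx2))
  have hnotmem : last ∉ cutset n p := by
    rw [mem_cutset]; rintro ⟨h, -⟩; simp [hlastdef] at h; omega
  have hcard : (insert last (cutset n p)).card = (cutset n p).card + 1 :=
    Finset.card_insert_of_notMem hnotmem
  rw [← hcard]
  apply Finset.card_le_card_of_injOn blk
  · intro x _; exact hblkP x
  · intro x hx y hy heq
    by_contra hne'
    rcases lt_or_gt_of_ne hne' with h | h
    · have hxC : x ∈ cutset n p := by
        rcases Finset.mem_insert.1 hx with rfl | hxC
        · exact absurd (Fin.lt_def.mp h) (by have := y.isLt; simp [hlastdef]; omega)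
        · exact hxC
      exact hkey x y hxC h heq
    · have hyC : y ∈ cutset n p := by
        rcases Finset.mem_insert.1 hy with rfl | hyC
        · exact absurd (Fin.lt_def.mp h) (by have := x.isLt; simp [hlastdef]; omega)
        · exact hyC
      exact hkey y x hyC h heq.symm

lemma adm_univ {n : ℕ} (hn : 1 ≤ n) {a p : Fin n → Fin n}
    (hap : ∀ x, a (p x) = x) (hpa : ∀ s, p (a s) = s)
    (hc : cutset n p = ∅) : AdmissiblePartition n a {Finset.univ} := by
  have hpinj : Function.Injective p := Function.LeftInverse.injective hap
  refine ⟨?_, ?_, ?_, ?_⟩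
  · intro B hB
    rw [Finset.mem_singleton] at hB
    subst hB
    exact ⟨⟨0, hn⟩, Finset.mem_univ _⟩
  · intro x
    exact ⟨Finset.univ, ⟨Finset.mem_singleton_self _, Finset.mem_univ _⟩,
      fun B hB => Finset.mem_singleton.1 hB.1⟩
  · intro B hB u v w _ _ _ _
    rw [Finset.mem_singleton] at hB
    subst hB
    exact Finset.mem_univ _
  · intro B _ s t _ _ hst
    have := lt_of_no_cut' hpinj hst (fun z _ _ => by simp [hc])
    rwa [hpa, hpa] at this

lemma adm_two {n : ℕ} {a p : Fin n → Fin n}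
    (hap : ∀ x, a (p x) = x) (hpa : ∀ s, p (a s) = s)
    {c : Fin n} (hc : cutset n p = {c}) :
    AdmissiblePartition n a {Finset.Iic c, Finset.Ioi c} ∧
      ({Finset.Iic c, Finset.Ioi c} : Finset (Finset (Fin n))).card = 2 := by
  have hpinj : Function.Injective p := Function.LeftInverse.injective hap
  have hc1 : (c : ℕ) + 1 < n := by
    have : c ∈ cutset n p := by rw [hc]; exact Finset.mem_singleton_self _
    exact (mem_cutset.1 this).1
  have hIicIoi : Finset.Iic c ≠ Finset.Ioi c := by
    intro h
    have : c ∈ Finset.Ioi c := h ▸ Finset.mem_Iic.2 le_rfl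
    exact absurd (Finset.mem_Ioi.1 this) (lt_irrefl c)
  constructor
  · refine ⟨?_, ?_, ?_, ?_⟩
    · intro B hB
      rcases Finset.mem_insert.1 hB with rfl | hB
      · exact ⟨c, Finset.mem_Iic.2 le_rfl⟩
      · rw [Finset.mem_singleton] at hB
        subst hB
        exact ⟨⟨(c:ℕ)+1, hc1⟩, Finset.mem_Ioi.2 (Fin.lt_def.mpr (by simp))⟩
    · intro x
      rcases le_or_gt x c with hx | hx
      · refine ⟨Finset.Iic c, ⟨Finset.mem_insert_self _ _, Finset.mem_Iic.2 hx⟩, ?_⟩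
        rintro B ⟨hB, hxB⟩
        rcases Finset.mem_insert.1 hB with rfl | hB
        · rfl
        · rw [Finset.mem_singleton] at hB
          subst hB
          exact absurd (Finset.mem_Ioi.1 hxB) (not_lt.2 hx)
      · refine ⟨Finset.Ioi c, ⟨Finset.mem_insert_of_mem (Finset.mem_singleton_self _),
          Finset.mem_Ioi.2 hx⟩, ?_⟩
        rintro B ⟨hB, hxB⟩
        rcases Finset.mem_insert.1 hB with rfl | hB
        · exact absurd (Finset.mem_Iic.1 hxB) (not_le.2 hx)
        · rw [Finset.mem_singleton] at hB
          subst hB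
          rfl
    · intro B hB u v w hu hw huv hvw
      rcases Finset.mem_insert.1 hB with rfl | hB
      · exact Finset.mem_Iic.2 (le_trans hvw (Finset.mem_Iic.1 hw))
      · rw [Finset.mem_singleton] at hB
        subst hB
        exact Finset.mem_Ioi.2 (lt_of_lt_of_le (Finset.mem_Ioi.1 hu) huv)
    · intro B hB s t hs ht hst
      rcases Finset.mem_insert.1 hB with rfl | hB
      · have := lt_of_no_cut' hpinj hst (fun z _ hz2 => by
          intro hzc
          rw [hc, Finset.mem_singleton] at hzc
          subst hzc
          exact absurd (lt_of_lt_of_le hz2 (Finset.mem_Iic.1 ht)) (lt_irrefl _))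
        rwa [hpa, hpa] at this
      · rw [Finset.mem_singleton] at hB
        subst hB
        have := lt_of_no_cut' hpinj hst (fun z hz1 _ => by
          intro hzc
          rw [hc, Finset.mem_singleton] at hzc
          subst hzc
          exact absurd (lt_of_lt_of_le (Finset.mem_Ioi.1 hs) hz1) (lt_irrefl _))
        rwa [hpa, hpa] at this
  · rw [Finset.card_insert_of_notMem (by simpa using hIicIoi), Finset.card_singleton]

lemma isLeast_iff {n : ℕ} (hn : 1 ≤ n) {a p : Fin n → Fin n}
    (hap : ∀ x, a (p x) = x) (hpa : ∀ s, p (a s) = s) :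
    IsLeast {k : ℕ | ∃ P : Finset (Finset (Fin n)),
      AdmissiblePartition n a P ∧ P.card = k} 2 ↔ (cutset n p).card = 1 := by
  constructor
  · rintro ⟨⟨P, hP, hP2⟩, hlb⟩
    have h1 : (cutset n p).card + 1 ≤ 2 := hP2 ▸ card_lower hn hP hap
    by_contra hne
    have h0 : cutset n p = ∅ := Finset.card_eq_zero.1 (by omega)
    have h1m : (1:ℕ) ∈ {k : ℕ | ∃ P : Finset (Finset (Fin n)),
        AdmissiblePartition n a P ∧ P.card = k} :=
      ⟨{Finset.univ}, adm_univ hn hap hpa h0, Finset.card_singleton _⟩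
    have := hlb h1m
    omega
  · intro h1
    obtain ⟨c, hc⟩ := Finset.card_eq_one.1 h1
    obtain ⟨hadm, hcard⟩ := adm_two hap hpa hc
    refine ⟨⟨_, hadm, hcard⟩, ?_⟩
    rintro k ⟨P, hP, rfl⟩
    have := card_lower hn hP hap
    omega

noncomputable def enumOf {n : ℕ} (S : Finset (Fin n)) (hkn : S.card < n) : Fin n → Fin n :=
  fun i => if h : (i : ℕ) < S.card then S.orderEmbOfFin rfl ⟨i, h⟩
    else Sᶜ.orderEmbOfFin (by rw [Finset.card_compl, Fintype.card_fin])
      ⟨(i:ℕ) - S.card, by have := i.isLt; omega⟩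

lemma enumOf_lt {n : ℕ} {S : Finset (Fin n)} (hkn : S.card < n) {i : Fin n}
    (h : (i : ℕ) < S.card) : enumOf S hkn i = S.orderEmbOfFin rfl ⟨i, h⟩ :=
  dif_pos h

lemma enumOf_ge {n : ℕ} {S : Finset (Fin n)} (hkn : S.card < n) {i : Fin n}
    (h : ¬ (i : ℕ) < S.card) :
    enumOf S hkn i = Sᶜ.orderEmbOfFin (by rw [Finset.card_compl, Fintype.card_fin])
      ⟨(i:ℕ) - S.card, by have := i.isLt; omega⟩ :=
  dif_neg h

lemma enumOf_mem_lt {n : ℕ} {S : Finset (Fin n)} (hkn : S.card < n) {i : Fin n}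
    (h : (i : ℕ) < S.card) : enumOf S hkn i ∈ S := by
  rw [enumOf_lt hkn h]; exact Finset.orderEmbOfFin_mem _ _ _

lemma enumOf_mem_ge {n : ℕ} {S : Finset (Fin n)} (hkn : S.card < n) {i : Fin n}
    (h : ¬ (i : ℕ) < S.card) : enumOf S hkn i ∈ Sᶜ := by
  rw [enumOf_ge hkn h]; exact Finset.orderEmbOfFin_mem _ _ _

lemma enumOf_injective {n : ℕ} (S : Finset (Fin n)) (hkn : S.card < n) :
    Function.Injective (enumOf S hkn) := by
  intro i j hij
  by_cases hi : (i : ℕ) < S.card <;> by_cases hj : (j : ℕ) < S.card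
  · rw [enumOf_lt hkn hi, enumOf_lt hkn hj] at hij
    have := (S.orderEmbOfFin rfl).injective hij
    have := congrArg Fin.val this
    simp at this
    exact Fin.ext this
  · exact absurd ((Finset.mem_compl.1 (enumOf_mem_ge hkn hj)))
      (by rw [← hij]; simp [enumOf_mem_lt hkn hi])
  · exact absurd ((Finset.mem_compl.1 (enumOf_mem_ge hkn hi)))
      (by rw [hij]; simp [enumOf_mem_lt hkn hj])
  · rw [enumOf_ge hkn hi, enumOf_ge hkn hj] at hij
    have := (Sᶜ.orderEmbOfFin _).injective hij
    have := congrArg Fin.val this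
    simp at this
    exact Fin.ext (by omega)

lemma enumOf_bijective {n : ℕ} (S : Finset (Fin n)) (hkn : S.card < n) :
    Function.Bijective (enumOf S hkn) :=
  Finite.injective_iff_bijective.1 (enumOf_injective S hkn)

lemma enumOf_zero {n : ℕ} (hn : 1 ≤ n) {S : Finset (Fin n)} (hkn : S.card < n)
    (h0 : (⟨0, hn⟩ : Fin n) ∈ S) : enumOf S hkn ⟨0, hn⟩ = ⟨0, hn⟩ := by
  have hpos : 0 < S.card := Finset.card_pos.2 ⟨_, h0⟩
  rw [enumOf_lt hkn (by simpa using hpos)]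
  have : S.orderEmbOfFin rfl ⟨0, hpos⟩ = S.min' ⟨_, h0⟩ := S.orderEmbOfFin_zero rfl hpos
  have heq : (⟨(0:ℕ), by simpa using hpos⟩ : Fin S.card) = ⟨0, hpos⟩ := rfl
  rw [heq, this]
  exact le_antisymm (Finset.min'_le _ _ h0) (Fin.le_def.mpr (Nat.zero_le _))

lemma compl_nonempty {n : ℕ} {S : Finset (Fin n)} (hkn : S.card < n) : Sᶜ.Nonempty := by
  rw [← Finset.card_pos, Finset.card_compl, Fintype.card_fin]
  omega

lemma min_compl_lt_max {n : ℕ} {S : Finset (Fin n)} (hkn : S.card < n)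
    (hSne : S.Nonempty)
    (hnd : ¬ ∀ x ∈ S, ∀ y, y ≤ x → y ∈ S) :
    Sᶜ.min' (compl_nonempty hkn) < S.max' hSne := by
  push_neg at hnd
  obtain ⟨x, hx, y, hyx, hyS⟩ := hnd
  have h1 : Sᶜ.min' (compl_nonempty hkn) ≤ y := Finset.min'_le _ _ (Finset.mem_compl.2 hyS)
  have h2 : x ≤ S.max' hSne := Finset.le_max' _ _ hx
  have h3 : Sᶜ.min' (compl_nonempty hkn) ≠ S.max' hSne := by
    intro h
    exact absurd (h ▸ Finset.max'_mem S hSne) (Finset.mem_compl.1 (Finset.min'_mem _ _))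
  exact lt_of_le_of_ne (le_trans h1 (le_trans hyx h2)) h3

lemma emb_congr {n k : ℕ} (s : Finset (Fin n)) (h : s.card = k) {i j : Fin k}
    (hij : (i : ℕ) = (j : ℕ)) : s.orderEmbOfFin h i = s.orderEmbOfFin h j :=
  congrArg _ (Fin.ext hij)

lemma cutset_enumOf {n : ℕ} {S : Finset (Fin n)} (hkn : S.card < n)
    (hSne : S.Nonempty)
    (hnd : ¬ ∀ x ∈ S, ∀ y, y ≤ x → y ∈ S) :
    cutset n (enumOf S hkn) = {⟨S.card - 1, by omega⟩} := by
  have hpos : 0 < S.card := Finset.card_pos.2 hSne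
  have hmaxval : enumOf S hkn ⟨S.card - 1, by omega⟩ = S.max' hSne := by
    rw [enumOf_lt hkn (show S.card - 1 < S.card from Nat.sub_lt hpos Nat.one_pos)]
    exact (emb_congr S rfl (j := ⟨S.card - 1, Nat.sub_lt hpos Nat.one_pos⟩) rfl).trans
      (S.orderEmbOfFin_last rfl hpos)
  have hminval : enumOf S hkn ⟨S.card, hkn⟩ = Sᶜ.min' (compl_nonempty hkn) := by
    rw [enumOf_ge hkn (show ¬ (S.card < S.card) from lt_irrefl _)]
    exact (emb_congr Sᶜ _ (j := ⟨0, by omega⟩) (Nat.sub_self _)).trans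
      (Sᶜ.orderEmbOfFin_zero _ (by omega))
  ext i
  rw [mem_cutset, Finset.mem_singleton]
  constructor
  · rintro ⟨h, hlt⟩
    by_contra hne
    have hival : (i : ℕ) + 1 ≠ S.card := by
      intro heq
      exact hne (Fin.ext (show (i:ℕ) = S.card - 1 by omega))
    rcases Nat.lt_or_ge ((i:ℕ) + 1) S.card with hcase | hcase
    · rw [enumOf_lt hkn (show (i:ℕ)+1 < S.card from hcase),
        enumOf_lt hkn (show (i:ℕ) < S.card by omega)] at hlt
      have hmono := (S.orderEmbOfFin rfl).strictMono
        (show ((⟨(i:ℕ), by omega⟩ : Fin S.card) : Fin S.card)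
            < ⟨(i:ℕ)+1, hcase⟩ from by exact Nat.lt_succ_self _)
      exact absurd hlt (not_lt.2 (le_of_lt hmono))
    · have hige : S.card ≤ (i : ℕ) := by omega
      rw [enumOf_ge hkn (show ¬ ((i:ℕ)+1 < S.card) by omega),
        enumOf_ge hkn (show ¬ ((i:ℕ) < S.card) by omega)] at hlt
      have hmono := (Sᶜ.orderEmbOfFin
          (show Sᶜ.card = n - S.card by rw [Finset.card_compl, Fintype.card_fin])).strictMono
        (show ((⟨(i:ℕ) - S.card, by have := i.isLt; omega⟩ : Fin (n - S.card)) : Fin (n - S.card))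
            < ⟨(i:ℕ)+1 - S.card, by have := h; omega⟩ from by
              show (i:ℕ) - S.card < (i:ℕ)+1 - S.card
              omega)
      exact absurd hlt (not_lt.2 (le_of_lt hmono))
  · rintro rfl
    refine ⟨show S.card - 1 + 1 < n by omega, ?_⟩
    have heq : (⟨((⟨S.card - 1, by omega⟩ : Fin n) : ℕ) + 1, show S.card - 1 + 1 < n by omega⟩ : Fin n)
        = ⟨S.card, hkn⟩ := Fin.ext (show S.card - 1 + 1 = S.card by omega)
    rw [heq, hmaxval, hminval]
    exact min_compl_lt_max hkn hSne hnd

open Classical in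
noncomputable def posSet (n : ℕ) (q : Fin n ≃ Fin n) : Finset (Fin n) :=
  Finset.univ.filter (fun x => ∃ i ∈ cutset n ⇑q, q.symm x ≤ i)

lemma mem_posSet_iff {n : ℕ} {q : Fin n ≃ Fin n} {c : Fin n}
    (hc : cutset n ⇑q = {c}) {x : Fin n} : x ∈ posSet n q ↔ q.symm x ≤ c := by
  simp [posSet, hc]

lemma card_posSet {n : ℕ} {q : Fin n ≃ Fin n} {c : Fin n}
    (hc : cutset n ⇑q = {c}) : (posSet n q).card = (c : ℕ) + 1 := by
  have himg : posSet n q = (Finset.Iic c).image ⇑q := by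
    ext x
    rw [mem_posSet_iff hc, Finset.mem_image]
    constructor
    · intro hx; exact ⟨q.symm x, Finset.mem_Iic.2 hx, q.apply_symm_apply x⟩
    · rintro ⟨y, hy, rfl⟩; rw [q.symm_apply_apply]; exact Finset.mem_Iic.1 hy
  rw [himg, Finset.card_image_of_injective _ q.injective, Fin.card_Iic]

lemma enumOf_posSet {n : ℕ} (q : Fin n ≃ Fin n) {c : Fin n}
    (hc : cutset n ⇑q = {c}) (hkn : (posSet n q).card < n) :
    enumOf (posSet n q) hkn = ⇑q := by
  have hcmem : c ∈ cutset n ⇑q := hc ▸ Finset.mem_singleton_self c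
  have hc1n : (c:ℕ) + 1 < n := (mem_cutset.1 hcmem).1
  have hqinj : Function.Injective ⇑q := q.injective
  have hk : (posSet n q).card = (c:ℕ) + 1 := card_posSet hc
  funext i
  by_cases hi : (i:ℕ) < (posSet n q).card
  · rw [enumOf_lt hkn hi]
    have hun : (fun j : Fin ((posSet n q).card) => q ⟨(j:ℕ), by have := j.isLt; omega⟩)
        = ⇑((posSet n q).orderEmbOfFin rfl) := by
      apply Finset.orderEmbOfFin_unique
      · intro x
        rw [mem_posSet_iff hc, q.symm_apply_apply]
        exact Fin.le_def.mpr (show (x:ℕ) ≤ (c:ℕ) from by have := x.isLt; omega)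
      · intro j j' hjj'
        refine lt_of_no_cut' hqinj (Fin.lt_def.mpr (show (j:ℕ) < (j':ℕ) from hjj')) ?_
        intro z hz1 hz2
        rw [hc, Finset.mem_singleton]
        intro hzc
        rw [hzc] at hz2
        have h2 : (c:ℕ) < (j':ℕ) := Fin.lt_def.mp hz2
        have := j'.isLt
        omega
    have := congrFun hun ⟨(i:ℕ), hi⟩
    refine (congrArg _ (Fin.ext rfl)).trans (this ▸ congrArg q (Fin.ext rfl))
  · rw [enumOf_ge hkn hi]
    have hun : (fun j : Fin (n - (posSet n q).card) =>
          q ⟨(posSet n q).card + (j:ℕ), by have := j.isLt; omega⟩)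
        = ⇑((posSet n q)ᶜ.orderEmbOfFin (by rw [Finset.card_compl, Fintype.card_fin])) := by
      apply Finset.orderEmbOfFin_unique
      · intro x
        rw [Finset.mem_compl, mem_posSet_iff hc, q.symm_apply_apply]
        intro hle
        have h2 : (posSet n q).card + (x:ℕ) ≤ (c:ℕ) := Fin.le_def.mp hle
        omega
      · intro j j' hjj'
        have hjj'' : (j:ℕ) < (j':ℕ) := hjj'
        refine lt_of_no_cut' hqinj
          (Fin.lt_def.mpr (show (posSet n q).card + (j:ℕ) < (posSet n q).card + (j':ℕ) by omega)) ?_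
        intro z hz1 hz2
        rw [hc, Finset.mem_singleton]
        intro hzc
        rw [hzc] at hz1
        have h2 : (posSet n q).card + (j:ℕ) ≤ (c:ℕ) := Fin.le_def.mp hz1
        omega
    have := congrFun hun ⟨(i:ℕ) - (posSet n q).card, by have := i.isLt; omega⟩
    refine (congrArg _ (Fin.ext rfl)).trans (this ▸ congrArg q (Fin.ext ?_))
    show (posSet n q).card + ((i:ℕ) - (posSet n q).card) = (i:ℕ)
    omega

lemma posSet_enumOf {n : ℕ} {S : Finset (Fin n)} (hkn : S.card < n)
    (hSne : S.Nonempty) (hnd : ¬ ∀ x ∈ S, ∀ y, y ≤ x → y ∈ S) :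
    posSet n (Equiv.ofBijective _ (enumOf_bijective S hkn)) = S := by
  set e := Equiv.ofBijective _ (enumOf_bijective S hkn) with he
  have hpos : 0 < S.card := Finset.card_pos.2 hSne
  have hcoe : ⇑e = enumOf S hkn := rfl
  have hce : cutset n ⇑e = {⟨S.card - 1, by omega⟩} := by
    rw [hcoe]; exact cutset_enumOf hkn hSne hnd
  ext x
  rw [mem_posSet_iff hce]
  have hx : e (e.symm x) = x := e.apply_symm_apply x
  constructor
  · intro hle
    have hlt : ((e.symm x : Fin n) : ℕ) < S.card := by
      have h2 : ((e.symm x : Fin n) : ℕ) ≤ S.card - 1 := Fin.le_def.mp hle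
      omega
    rw [← hx, hcoe]
    exact enumOf_mem_lt hkn hlt
  · intro hxS
    by_contra hnle
    have hge : ¬ ((e.symm x : Fin n) : ℕ) < S.card := by
      intro hlt
      exact hnle (Fin.le_def.mpr (show ((e.symm x : Fin n) : ℕ) ≤ S.card - 1 by omega))
    have := enumOf_mem_ge hkn hge
    rw [← hcoe, hx] at this
    exact Finset.mem_compl.1 this hxS

lemma symm_zero {n : ℕ} (hn : 1 ≤ n) {q : Fin n ≃ Fin n}
    (hz : q ⟨0, hn⟩ = ⟨0, hn⟩) : q.symm ⟨0, hn⟩ = ⟨0, hn⟩ :=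
  q.injective (by rw [q.apply_symm_apply, hz])

lemma zero_mem_posSet {n : ℕ} (hn : 1 ≤ n) {q : Fin n ≃ Fin n} {c : Fin n}
    (hc : cutset n ⇑q = {c}) (hz : q ⟨0, hn⟩ = ⟨0, hn⟩) : (⟨0, hn⟩ : Fin n) ∈ posSet n q := by
  rw [mem_posSet_iff hc, symm_zero hn hz]
  exact Fin.le_def.mpr (Nat.zero_le _)

lemma posSet_not_down {n : ℕ} {q : Fin n ≃ Fin n} {c : Fin n}
    (hc : cutset n ⇑q = {c}) :
    ¬ ∀ x ∈ posSet n q, ∀ y, y ≤ x → y ∈ posSet n q := by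
  intro hdown
  have hcmem : c ∈ cutset n ⇑q := hc ▸ Finset.mem_singleton_self c
  obtain ⟨hc1n, hcut⟩ := mem_cutset.1 hcmem
  have hx : q c ∈ posSet n q := by
    rw [mem_posSet_iff hc, q.symm_apply_apply]
  have hy := hdown (q c) hx (q ⟨(c:ℕ)+1, hc1n⟩) (le_of_lt hcut)
  rw [mem_posSet_iff hc, q.symm_apply_apply] at hy
  have h3 : (c:ℕ) + 1 ≤ (c:ℕ) := Fin.le_def.mp hy
  omega

lemma card_Z (n : ℕ) (hn : 1 ≤ n) :
    Nat.card {S : Finset (Fin n) // (⟨0, hn⟩ : Fin n) ∈ S ∧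
      ¬ ∀ x ∈ S, ∀ y, y ≤ x → y ∈ S} = 2 ^ (n - 1) - n := by
  classical
  rw [Nat.card_eq_fintype_card, Fintype.card_subtype]
  set z : Fin n := ⟨0, hn⟩ with hz
  have hzle : ∀ x : Fin n, z ≤ x := fun x => Fin.le_def.mpr (Nat.zero_le _)
  have hA : (Finset.univ.filter (fun S : Finset (Fin n) => z ∈ S)).card = 2 ^ (n - 1) := by
    rw [show (2:ℕ) ^ (n-1) = ((Finset.univ.erase z).powerset).card by
      rw [Finset.card_powerset, Finset.card_erase_of_mem (Finset.mem_univ z),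
        Finset.card_univ, Fintype.card_fin]]
    refine Finset.card_bij' (fun S _ => S.erase z) (fun T _ => insert z T) ?hi ?hj ?left ?right
    case hi =>
      intro S hS
      rw [Finset.mem_powerset]
      intro x hx
      rw [Finset.mem_erase] at hx ⊢
      exact ⟨hx.1, Finset.mem_univ x⟩
    case hj =>
      intro T _
      rw [Finset.mem_filter]
      exact ⟨Finset.mem_univ _, Finset.mem_insert_self _ _⟩
    case left =>
      intro S hS
      rw [Finset.mem_filter] at hS
      exact Finset.insert_erase hS.2
    case right =>
      intro T hT
      rw [Finset.mem_powerset] at hT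
      apply Finset.erase_insert
      intro hzT
      have := hT hzT
      rw [Finset.mem_erase] at this
      exact this.1 rfl
  have hB : (Finset.univ.filter (fun S : Finset (Fin n) =>
      z ∈ S ∧ ∀ x ∈ S, ∀ y, y ≤ x → y ∈ S)).card = n := by
    have himg : Finset.univ.filter (fun S : Finset (Fin n) =>
        z ∈ S ∧ ∀ x ∈ S, ∀ y, y ≤ x → y ∈ S)
        = Finset.univ.image (fun c : Fin n => Finset.Iic c) := by
      ext S
      rw [Finset.mem_filter, Finset.mem_image]
      constructor
      · rintro ⟨-, hzS, hdown⟩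
        refine ⟨S.max' ⟨z, hzS⟩, Finset.mem_univ _, ?_⟩
        ext x
        rw [Finset.mem_Iic]
        exact ⟨fun hx => hdown _ (S.max'_mem _) x hx, fun hx => S.le_max' x hx⟩
      · rintro ⟨c, -, rfl⟩
        exact ⟨Finset.mem_univ _, Finset.mem_Iic.2 (hzle c),
          fun x hx y hyx => Finset.mem_Iic.2 (le_trans hyx (Finset.mem_Iic.1 hx))⟩
    rw [himg, Finset.card_image_of_injective _ ?_, Finset.card_univ, Fintype.card_fin]
    intro a b hab
    have hab' : Finset.Iic a = Finset.Iic b := hab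
    have h1 : a ≤ b := Finset.mem_Iic.1 (hab' ▸ Finset.mem_Iic.2 (le_refl a))
    have h2 : b ≤ a := Finset.mem_Iic.1 (hab'.symm ▸ Finset.mem_Iic.2 (le_refl b))
    exact le_antisymm h1 h2
  have hsub : Finset.univ.filter (fun S : Finset (Fin n) =>
        z ∈ S ∧ ∀ x ∈ S, ∀ y, y ≤ x → y ∈ S)
      ⊆ Finset.univ.filter (fun S : Finset (Fin n) => z ∈ S) := by
    intro S hS
    rw [Finset.mem_filter] at hS ⊢
    exact ⟨hS.1, hS.2.1⟩
  have hsplit : Finset.univ.filter (fun S : Finset (Fin n) =>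
        z ∈ S ∧ ¬ ∀ x ∈ S, ∀ y, y ≤ x → y ∈ S)
      = Finset.univ.filter (fun S : Finset (Fin n) => z ∈ S)
        \ Finset.univ.filter (fun S : Finset (Fin n) =>
            z ∈ S ∧ ∀ x ∈ S, ∀ y, y ≤ x → y ∈ S) := by
    ext S
    simp only [Finset.mem_sdiff, Finset.mem_filter, Finset.mem_univ, true_and]
    tauto
  rw [hsplit, Finset.card_sdiff_of_subset hsub, hA, hB]

lemma card_lt_of_not_down {n : ℕ} {S : Finset (Fin n)}
    (hnd : ¬ ∀ x ∈ S, ∀ y, y ≤ x → y ∈ S) : S.card < n := by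
  by_contra h
  push_neg at h
  have hle : S.card ≤ n := le_trans (Finset.card_le_univ S)
    (le_of_eq (by simp))
  have : S = Finset.univ := Finset.eq_univ_of_card S (by rw [Fintype.card_fin]; omega)
  subst this
  exact hnd (fun x _ y _ => Finset.mem_univ y)

noncomputable def toZmap (n : ℕ) (hn : 1 ≤ n)
    (x : {a : Fin n → Fin n // Function.Bijective a ∧ a ⟨0, hn⟩ = ⟨0, hn⟩ ∧
        IsLeast {k : ℕ | ∃ P : Finset (Finset (Fin n)),
          AdmissiblePartition n a P ∧ P.card = k} 2}) :
    {S : Finset (Fin n) // (⟨0, hn⟩ : Fin n) ∈ S ∧ ¬ ∀ x ∈ S, ∀ y, y ≤ x → y ∈ S} :=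
  ⟨posSet n (Equiv.ofBijective x.1 x.2.1).symm, by
    have hap : ∀ v, x.1 ((Equiv.ofBijective x.1 x.2.1).symm v) = v :=
      fun v => (Equiv.ofBijective x.1 x.2.1).apply_symm_apply v
    have hpa : ∀ s, (Equiv.ofBijective x.1 x.2.1).symm (x.1 s) = s :=
      fun s => (Equiv.ofBijective x.1 x.2.1).symm_apply_apply s
    have hcut : (cutset n ⇑(Equiv.ofBijective x.1 x.2.1).symm).card = 1 :=
      (isLeast_iff hn hap hpa).1 x.2.2.2
    obtain ⟨c, hc⟩ := Finset.card_eq_one.1 hcut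
    have hz : (Equiv.ofBijective x.1 x.2.1).symm ⟨0, hn⟩ = ⟨0, hn⟩ :=
      symm_zero hn x.2.2.1
    exact ⟨zero_mem_posSet hn hc hz, posSet_not_down hc⟩⟩

noncomputable def fromZmap (n : ℕ) (hn : 1 ≤ n)
    (s : {S : Finset (Fin n) // (⟨0, hn⟩ : Fin n) ∈ S ∧ ¬ ∀ x ∈ S, ∀ y, y ≤ x → y ∈ S}) :
    {a : Fin n → Fin n // Function.Bijective a ∧ a ⟨0, hn⟩ = ⟨0, hn⟩ ∧
        IsLeast {k : ℕ | ∃ P : Finset (Finset (Fin n)),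
          AdmissiblePartition n a P ∧ P.card = k} 2} :=
  ⟨⇑(Equiv.ofBijective (enumOf s.1 (card_lt_of_not_down s.2.2))
      (enumOf_bijective s.1 (card_lt_of_not_down s.2.2))).symm, by
    set E := Equiv.ofBijective (enumOf s.1 (card_lt_of_not_down s.2.2))
      (enumOf_bijective s.1 (card_lt_of_not_down s.2.2)) with hE
    have hEz : E ⟨0, hn⟩ = ⟨0, hn⟩ := enumOf_zero hn (card_lt_of_not_down s.2.2) s.2.1
    have hap : ∀ v, (⇑E.symm) (E v) = v := fun v => E.symm_apply_apply v
    have hpa : ∀ v, E ((⇑E.symm) v) = v := fun v => E.apply_symm_apply v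
    refine ⟨E.symm.bijective, symm_zero hn hEz, (isLeast_iff hn (p := ⇑E) hap hpa).2 ?_⟩
    have : cutset n ⇑E = {⟨s.1.card - 1, by have := card_lt_of_not_down s.2.2; omega⟩} :=
      cutset_enumOf (card_lt_of_not_down s.2.2) ⟨_, s.2.1⟩ s.2.2
    rw [this, Finset.card_singleton]⟩

lemma round1 {n : ℕ} (q : Fin n ≃ Fin n) {c : Fin n} (hc : cutset n ⇑q = {c})
    (hkn : (posSet n q).card < n) (hb : Function.Bijective (enumOf (posSet n q) hkn)) :
    ⇑(Equiv.ofBijective (enumOf (posSet n q) hkn) hb).symm = ⇑q.symm := by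
  have h2 : Equiv.ofBijective (enumOf (posSet n q) hkn) hb = q :=
    Equiv.coe_fn_injective (show enumOf (posSet n q) hkn = ⇑q from enumOf_posSet q hc hkn)
  rw [h2]

lemma fromZ_toZ (n : ℕ) (hn : 1 ≤ n) (x) : fromZmap n hn (toZmap n hn x) = x := by
  apply Subtype.ext
  have hap : ∀ v, x.1 ((Equiv.ofBijective x.1 x.2.1).symm v) = v :=
    fun v => (Equiv.ofBijective x.1 x.2.1).apply_symm_apply v
  have hpa : ∀ s, (Equiv.ofBijective x.1 x.2.1).symm (x.1 s) = s :=
    fun s => (Equiv.ofBijective x.1 x.2.1).symm_apply_apply s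
  have hcut : (cutset n ⇑(Equiv.ofBijective x.1 x.2.1).symm).card = 1 :=
    (isLeast_iff hn hap hpa).1 x.2.2.2
  obtain ⟨c, hc⟩ := Finset.card_eq_one.1 hcut
  show (fromZmap n hn (toZmap n hn x)).1 = x.1
  dsimp only [fromZmap, toZmap]
  rw [round1 (Equiv.ofBijective x.1 x.2.1).symm hc]
  rfl

lemma toZ_fromZ (n : ℕ) (hn : 1 ≤ n) (s) : toZmap n hn (fromZmap n hn s) = s := by
  apply Subtype.ext
  dsimp only [toZmap, fromZmap]
  have h5 : Equiv.ofBijective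
      (⇑(Equiv.ofBijective (enumOf s.1 (card_lt_of_not_down s.2.2))
          (enumOf_bijective s.1 (card_lt_of_not_down s.2.2))).symm)
      ((Equiv.ofBijective (enumOf s.1 (card_lt_of_not_down s.2.2))
          (enumOf_bijective s.1 (card_lt_of_not_down s.2.2))).symm.bijective)
      = (Equiv.ofBijective (enumOf s.1 (card_lt_of_not_down s.2.2))
          (enumOf_bijective s.1 (card_lt_of_not_down s.2.2))).symm :=
    Equiv.coe_fn_injective rfl
  rw [h5, Equiv.symm_symm]
  exact posSet_enumOf (card_lt_of_not_down s.2.2) ⟨_, s.2.1⟩ s.2.2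


/-- The number of `2`-standard consecutive `n`-cycles is `2^(n-1) - n`: the number of
enumerations `a` of `{0, …, n-1}` starting at `0` for which the minimum number of blocks
of an admissible partition equals `2` is exactly `2^(n-1) - n`. -/
theorem card_two_standard_consecutive_cycles (n : ℕ) (hn : 1 ≤ n) :
    Nat.card {a : Fin n → Fin n // Function.Bijective a ∧ a ⟨0, hn⟩ = ⟨0, hn⟩ ∧
        IsLeast {k : ℕ | ∃ P : Finset (Finset (Fin n)),
          AdmissiblePartition n a P ∧ P.card = k} 2}
      = 2 ^ (n - 1) - n := by
  rw [← card_Z n hn]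
  exact Nat.card_congr ⟨toZmap n hn, fromZmap n hn, fromZ_toZ n hn, toZ_fromZ n hn⟩
end
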